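/- For every natural number f ≥ 1, the function ψ_f(x) = c_f sin((2f+1)x/2), where c_f = (−1)^f · (1/4)·(3/8)·(5/12)···((2f−1)/(4f)) (i.e. c_f = (−1)^f ∏_{k=1}^{f} (2k−1)/(4k)), satisfies the dual-shadow recursion (−1/2+f)² ψ_f + ψ_f'' = −[(−1/2+f)(−1/2+f−1) cos(x) ψ_{f−1}(x) − sin(x) ψ_{f−1}'(x) + cos(x) ψ_{f−1}''(x)] for all real x (with ψ₀(x) = sin(x/2) and the f = 1 equation read as (−1/2+1)² ψ₁ + ψ₁'' = −(−(1/2) cos x ψ₀ − sin x ψ₀')), and ψ_f'(±π) = 0. -/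

import Mathlib

open Real

noncomputable def dualCoeff (f : ℕ) : ℝ :=
  (-1)^f * ∏ k ∈ Finset.Icc 1 f, ((2*(k : ℝ) - 1) / (4*(k : ℝ)))

noncomputable def dualShadow (f : ℕ) : ℝ → ℝ :=
  fun x => dualCoeff f * Real.sin ((2*(f : ℝ) + 1) * x / 2)

lemma hasDerivAt_shadow (f : ℕ) (x : ℝ) :
    HasDerivAt (dualShadow f)
      (dualCoeff f * ((2*(f:ℝ)+1)/2) * Real.cos ((2*(f:ℝ)+1)*x/2)) x := by
  have h1 : HasDerivAt (fun x : ℝ => (2*(f:ℝ)+1)*x/2) ((2*(f:ℝ)+1)/2) x := by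
    simpa using ((hasDerivAt_id x).const_mul (2*(f:ℝ)+1)).div_const 2
  have h2 := ((Real.hasDerivAt_sin ((2*(f:ℝ)+1)*x/2)).comp x h1).const_mul (dualCoeff f)
  exact h2.congr_deriv (by ring)

lemma deriv_shadow (f : ℕ) :
    deriv (dualShadow f) =
      fun x => dualCoeff f * ((2*(f:ℝ)+1)/2) * Real.cos ((2*(f:ℝ)+1)*x/2) := by
  funext x; exact (hasDerivAt_shadow f x).deriv

lemma deriv2_shadow (f : ℕ) (x : ℝ) :
    deriv (deriv (dualShadow f)) x =
      -(dualCoeff f * ((2*(f:ℝ)+1)/2) * ((2*(f:ℝ)+1)/2)) * Real.sin ((2*(f:ℝ)+1)*x/2) := by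
  rw [deriv_shadow]
  have h1 : HasDerivAt (fun x : ℝ => (2*(f:ℝ)+1)*x/2) ((2*(f:ℝ)+1)/2) x := by
    simpa using ((hasDerivAt_id x).const_mul (2*(f:ℝ)+1)).div_const 2
  have h2 : HasDerivAt (fun x => dualCoeff f * ((2*(f:ℝ)+1)/2) * Real.cos ((2*(f:ℝ)+1)*x/2))
      (dualCoeff f * ((2*(f:ℝ)+1)/2) * (-Real.sin ((2*(f:ℝ)+1)*x/2) * ((2*(f:ℝ)+1)/2))) x :=
    ((Real.hasDerivAt_cos ((2*(f:ℝ)+1)*x/2)).comp x h1).const_mul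
      (dualCoeff f * ((2*(f:ℝ)+1)/2))
  rw [h2.deriv]; ring

lemma dualCoeff_rec (f : ℕ) (hf : 1 ≤ f) :
    dualCoeff f = -((2*(f:ℝ)-1)/(4*(f:ℝ))) * dualCoeff (f-1) := by
  obtain ⟨m, rfl⟩ : ∃ m, f = m + 1 := ⟨f - 1, (Nat.succ_pred_eq_of_pos hf).symm⟩
  simp only [Nat.add_sub_cancel, dualCoeff]
  rw [Finset.prod_Icc_succ_top (by omega)]
  push_cast
  ring

theorem crack_dual_shadows_closed_form (f : ℕ) (hf : 1 ≤ f) :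
    (∀ x : ℝ, (-(1/2 : ℝ) + (f : ℝ))^2 * dualShadow f x + deriv (deriv (dualShadow f)) x =
      (if f = 1 then
        -(-(1/2 : ℝ) * Real.cos x * dualShadow 0 x - Real.sin x * deriv (dualShadow 0) x)
      else
        -((-(1/2 : ℝ) + (f : ℝ)) * (-(1/2 : ℝ) + (f : ℝ) - 1) * Real.cos x * dualShadow (f-1) x
          - Real.sin x * deriv (dualShadow (f-1)) x
          + Real.cos x * deriv (deriv (dualShadow (f-1))) x))) ∧
    deriv (dualShadow f) (-π) = 0 ∧ deriv (dualShadow f) π = 0 := by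
  have hb : ∀ x : ℝ, Real.cos ((2*(f:ℝ)+1)*x/2) = Real.cos ((2*(f:ℝ)+1)/2 * x) := by
    intro x; ring_nf
  refine ⟨?_, ?_, ?_⟩
  · intro x
    have hcast : ((f - 1 : ℕ) : ℝ) = (f : ℝ) - 1 := by
      push_cast [Nat.cast_sub hf]; ring
    have key : (2*((f-1:ℕ):ℝ)+1)*x/2 + x = (2*(f:ℝ)+1)*x/2 := by
      rw [hcast]; ring
    have hsin : Real.sin ((2*(f:ℝ)+1)*x/2) =
        Real.sin ((2*((f-1:ℕ):ℝ)+1)*x/2) * Real.cos x +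
        Real.cos ((2*((f-1:ℕ):ℝ)+1)*x/2) * Real.sin x := by
      rw [← key, Real.sin_add]
    have hrec := dualCoeff_rec f hf
    rw [deriv2_shadow f x]
    by_cases h1 : f = 1
    · subst h1
      rw [if_pos rfl]
      simp only [dualShadow, deriv_shadow]
      norm_num at hsin hrec ⊢
      rw [hsin, hrec]
      ring
    · rw [if_neg h1, deriv2_shadow (f-1) x]
      simp only [dualShadow, deriv_shadow]
      rw [hsin, hrec, hcast]
      have hf0 : (f : ℝ) ≠ 0 := Nat.cast_ne_zero.mpr (by omega)
      field_simp
      ring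
  · rw [deriv_shadow]
    simp only
    have : (2*(f:ℝ)+1)*(-π)/2 = -((f:ℝ)*π + π/2) := by ring
    rw [this, Real.cos_neg, Real.cos_add_pi_div_two, Real.sin_nat_mul_pi]
    ring
  · rw [deriv_shadow]
    simp only
    have : (2*(f:ℝ)+1)*π/2 = (f:ℝ)*π + π/2 := by ring
    rw [this, Real.cos_add_pi_div_two, Real.sin_nat_mul_pi]
    ring
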